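/- arXiv:1711.05134 — 2 statements merged into one kernel-verified Lean document; each statement's English description precedes it below -/
import Mathlib

section
/- Let $a, b, c$ be real with $a + b > -1/2$ and $c > 0$, and let $t > 0$. Then $\int_0^t (t-x)^{c-1} x^{a-1} e^{-x/2} M_{a+c,\,b}(x)\,dx = \frac{\Gamma(c)\,\Gamma(a + b + 1/2)}{\Gamma(a + b + c + 1/2)}\, t^{a+c-1} e^{-t/2} M_{a,b}(t)$. -/
open MeasureTheory Real Filter Set

/-- Kummer's confluent hypergeometric function ₁F₁(a; b; x). -/
noncomputable def hyp1F1 (a b x : ℝ) : ℝ :=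
  ∑' n : ℕ, ((ascPochhammer ℝ n).eval a / (ascPochhammer ℝ n).eval b) * x ^ n / (n.factorial : ℝ)

/-- The Whittaker M function. -/
noncomputable def whittakerM (a b x : ℝ) : ℝ :=
  x ^ (1/2 + b) * Real.exp (-x/2) * hyp1F1 (1/2 + b - a) (1 + 2*b) x

/-- The Whittaker W function, defined via the connection formula
`W_{a,b} = Γ(-2b)/Γ(1/2-b-a) M_{a,b} + Γ(2b)/Γ(1/2+b-a) M_{a,-b}`,
with exceptional parameter values handled by continuity in `b` (a limit). -/
noncomputable def whittakerW (a b x : ℝ) : ℝ :=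
  limUnder (nhdsWithin b {b}ᶜ) (fun c =>
    Real.Gamma (-(2*c)) / Real.Gamma (1/2 - c - a) * whittakerM a c x +
    Real.Gamma (2*c) / Real.Gamma (1/2 + c - a) * whittakerM a (-c) x)

/-- Speed density of the Shiryaev martingale. -/
noncomputable def speedm (x : ℝ) : ℝ := (2 / x^2) * Real.exp (-2/x)


noncomputable def poch (x : ℝ) (n : ℕ) : ℝ := (ascPochhammer ℝ n).eval x

@[simp] lemma poch_zero (x : ℝ) : poch x 0 = 1 := by simp [poch]

lemma poch_succ_right (x : ℝ) (n : ℕ) : poch x (n+1) = poch x n * (x + n) := by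
  simp [poch, ascPochhammer_succ_eval]

lemma poch_succ_left (x : ℝ) (n : ℕ) : poch x (n+1) = x * poch (x+1) n := by
  simp only [poch, ascPochhammer_succ_left, Polynomial.eval_mul, Polynomial.eval_X,
    Polynomial.eval_comp, Polynomial.eval_add, Polynomial.eval_one]

lemma poch_add (x : ℝ) (k m : ℕ) : poch x (k + m) = poch x k * poch (x + k) m := by
  have := ascPochhammer_mul ℝ k m
  have h := congrArg (Polynomial.eval x) this
  simpa [poch, Polynomial.eval_comp] using h.symm

lemma poch_pos {x : ℝ} (hx : 0 < x) (n : ℕ) : 0 < poch x n := ascPochhammer_pos n x hx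

noncomputable def vdS (n : ℕ) (x y : ℝ) : ℝ :=
  ∑ k ∈ Finset.range (n+1), (-1:ℝ)^k * (n.choose k) * poch x k * poch (y + k) (n - k)

lemma vdS_succ (n : ℕ) (x y : ℝ) :
    vdS (n+1) x y = (y + n) * vdS n x y - x * vdS n (x+1) (y+1) := by
  have h1 : vdS (n+1) x y = (∑ k ∈ Finset.range (n+1),
      (-1:ℝ)^(k+1) * ((n+1).choose (k+1)) * poch x (k+1) * poch (y + (k+1)) (n + 1 - (k+1)))
      + poch y (n+1) := by
    rw [vdS, Finset.sum_range_succ' _ (n+1)]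
    simp
  have h2 : ∀ k ∈ Finset.range (n+1),
      (-1:ℝ)^(k+1) * ((n+1).choose (k+1)) * poch x (k+1) * poch (y + (k+1)) (n + 1 - (k+1))
      = (-1:ℝ)^(k+1) * (n.choose k) * poch x (k+1) * poch (y + (k+1)) (n - k)
        + (-1:ℝ)^(k+1) * (n.choose (k+1)) * poch x (k+1) * poch (y + (k+1)) (n - k) := by
    intro k hk
    have hnk : n + 1 - (k + 1) = n - k := by omega
    rw [hnk, Nat.choose_succ_succ, Nat.cast_add]
    ring
  rw [h1, Finset.sum_congr rfl h2, Finset.sum_add_distrib]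
  -- first sum is -x * vdS n (x+1) (y+1)
  have hA : ∑ k ∈ Finset.range (n+1),
      (-1:ℝ)^(k+1) * (n.choose k) * poch x (k+1) * poch (y + (k+1)) (n - k)
      = -x * vdS n (x+1) (y+1) := by
    rw [vdS, Finset.mul_sum]
    apply Finset.sum_congr rfl
    intro k hk
    rw [poch_succ_left x k]
    have : y + ((k:ℝ) + 1) = (y + 1) + (k:ℝ) := by ring
    rw [this]
    ring
  -- second sum
  have hB : ∑ k ∈ Finset.range (n+1),
      (-1:ℝ)^(k+1) * (n.choose (k+1)) * poch x (k+1) * poch (y + (k+1)) (n - k)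
      = (y + n) * vdS n x y - poch y (n+1) := by
    have e1 : ∑ k ∈ Finset.range (n+1),
        (-1:ℝ)^(k+1) * (n.choose (k+1)) * poch x (k+1) * poch (y + (k+1)) (n - k)
        = (∑ j ∈ Finset.range (n+2), (-1:ℝ)^j * (n.choose j) * poch x j * poch (y + j) (n + 1 - j))
          - poch y (n+1) := by
      rw [Finset.sum_range_succ' (fun j => (-1:ℝ)^j * (n.choose j) * poch x j * poch (y + j) (n + 1 - j)) (n+1)]
      have h4 : ∀ k ∈ Finset.range (n+1), (-1:ℝ)^(k+1) * (n.choose (k+1)) * poch x (k+1) * poch (y + ((k:ℝ)+1)) (n + 1 - (k+1))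
          = (-1:ℝ)^(k+1) * (n.choose (k+1)) * poch x (k+1) * poch (y + ((k:ℝ)+1)) (n - k) := by
        intro k hk; have hnk : n + 1 - (k + 1) = n - k := by omega
        rw [hnk]
      simp only [Nat.cast_add, Nat.cast_one] at h4 ⊢
      rw [Finset.sum_congr rfl h4]
      simp
    rw [e1, Finset.sum_range_succ]
    simp only [Nat.choose_succ_self, Nat.cast_zero]
    have e2 : ∀ j ∈ Finset.range (n+1), (-1:ℝ)^j * (n.choose j) * poch x j * poch (y + j) (n + 1 - j)
        = (y + n) * ((-1:ℝ)^j * (n.choose j) * poch x j * poch (y + j) (n - j)) := by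
      intro j hj
      rw [Finset.mem_range] at hj
      have h3 : n + 1 - j = (n - j) + 1 := by omega
      rw [h3, poch_succ_right]
      have : (y + j) + (↑(n - j) : ℝ) = y + n := by
        have : (↑(n - j) : ℝ) = n - j := by
          rw [Nat.cast_sub (by omega)]
        rw [this]; ring
      rw [this]; ring
    rw [Finset.sum_congr rfl e2, ← Finset.mul_sum, vdS]
    ring
  rw [hA, hB]; ring

lemma vdS_eq (n : ℕ) : ∀ x y : ℝ, vdS n x y = poch (y - x) n := by
  induction n with
  | zero => intro x y; simp [vdS]
  | succ n ih =>
    intro x y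
    rw [vdS_succ, ih, ih, poch_succ_right]
    have : (y + 1) - (x + 1) = y - x := by ring
    rw [this]; ring

noncomputable def hterm (p B x : ℝ) (n : ℕ) : ℝ := poch p n / poch B n * x ^ n / (n.factorial : ℝ)

lemma hterm_succ (p B x : ℝ) (hB : ∀ n : ℕ, poch B n ≠ 0) (n : ℕ) :
    hterm p B x (n+1) = hterm p B x n * ((p + n) / (B + n) * x / (n+1)) := by
  rw [hterm, hterm, poch_succ_right, poch_succ_right, Nat.factorial_succ]
  have h1 : poch B n ≠ 0 := hB n
  have h2 : (B + n) ≠ 0 := by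
    intro h
    exact hB (n+1) (by rw [poch_succ_right, h, mul_zero])
  have h3 : ((n+1 : ℕ).factorial : ℝ) ≠ 0 := Nat.cast_ne_zero.mpr (Nat.factorial_ne_zero _)
  have h4 : ((n.factorial : ℕ) : ℝ) ≠ 0 := Nat.cast_ne_zero.mpr (Nat.factorial_ne_zero _)
  field_simp
  push_cast; ring

lemma summable_norm_hterm (p B x : ℝ) (hB : ∀ n : ℕ, poch B n ≠ 0) :
    Summable (fun n => ‖hterm p B x n‖) := by
  apply summable_of_ratio_norm_eventually_le (r := 1/2) (by norm_num)
  rw [Filter.eventually_atTop]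
  refine ⟨⌈|p|⌉₊ + 2 * ⌈|B|⌉₊ + 8 * ⌈|x|⌉₊ + 1, fun n hn => ?_⟩
  have hp : |p| ≤ n := le_trans (Nat.le_ceil _) (by exact_mod_cast le_trans (by omega) hn)
  have hBn : 2 * |B| ≤ n := by
    have : (2 * ⌈|B|⌉₊ : ℝ) ≤ n := by exact_mod_cast le_trans (by omega) hn
    nlinarith [Nat.le_ceil |B|]
  have hx8 : 8 * |x| ≤ n := by
    have : (8 * ⌈|x|⌉₊ : ℝ) ≤ n := by exact_mod_cast le_trans (by omega) hn
    nlinarith [Nat.le_ceil |x|]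
  have hn1 : (1:ℝ) ≤ n := by exact_mod_cast Nat.one_le_iff_ne_zero.mpr (by omega)
  rw [norm_norm, norm_norm, hterm_succ p B x hB n, norm_mul]
  rw [mul_comm ((1:ℝ)/2)]
  apply mul_le_mul_of_nonneg_left _ (norm_nonneg _)
  -- ‖(p+n)/(B+n)*x/(n+1)‖ ≤ 1/2
  have hBn' : (0:ℝ) < B + n := by
    have : |B| ≤ n / 2 := by linarith
    have := abs_le.mp this
    linarith
  have hpn : |p + (n:ℝ)| ≤ 2 * n := by
    have := abs_le.mp hp
    rw [abs_le]; constructor <;> linarith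
  rw [norm_div, norm_mul, norm_div]
  have e1 : ‖(B:ℝ) + n‖ = B + n := by rw [Real.norm_eq_abs, abs_of_pos hBn']
  have e2 : ‖((n:ℝ) + 1)‖ = n + 1 := by rw [Real.norm_eq_abs, abs_of_pos (by linarith)]
  rw [e1, e2, Real.norm_eq_abs, Real.norm_eq_abs, div_mul_eq_mul_div, div_div,
    div_le_iff₀ (by positivity)]
  have hB2 : (n:ℝ)/2 ≤ B + n := by
    have := abs_le.mp (by linarith : |B| ≤ (n:ℝ)/2)
    linarith
  have hxn : |x| ≤ n / 8 := by linarith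
  have h9 : |p + (n:ℝ)| * |x| ≤ (2*n) * (n/8) :=
    mul_le_mul hpn hxn (abs_nonneg _) (by positivity)
  nlinarith

lemma summable_norm_expterm (x : ℝ) : Summable (fun m : ℕ => ‖(-x) ^ m / (m.factorial : ℝ)‖) := by
  apply (Real.summable_pow_div_factorial |x|).congr
  intro m
  rw [norm_div, norm_pow, Real.norm_eq_abs, Real.norm_eq_abs, abs_neg,
    abs_of_nonneg (by positivity : (0:ℝ) ≤ (m.factorial : ℝ))]

lemma exp_neg_eq_tsum (x : ℝ) : Real.exp (-x) = ∑' m : ℕ, (-x) ^ m / (m.factorial : ℝ) := by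
  rw [Real.exp_eq_exp_ℝ, NormedSpace.exp_eq_tsum_div]

lemma kummer (α B x : ℝ) (hB : ∀ n : ℕ, poch B n ≠ 0) :
    (∑' n, hterm α B x n) * Real.exp (-x) = ∑' n, hterm (B - α) B (-x) n := by
  rw [exp_neg_eq_tsum,
    tsum_mul_tsum_eq_tsum_sum_antidiagonal_of_summable_norm
      (summable_norm_hterm α B x hB) (summable_norm_expterm x)]
  apply tsum_congr
  intro n
  rw [Finset.Nat.sum_antidiagonal_eq_sum_range_succ
    (fun k m => hterm α B x k * ((-x) ^ m / (m.factorial : ℝ)))]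
  have hrhs : hterm (B - α) B (-x) n
      = ∑ k ∈ Finset.range (n+1), ((-1:ℝ))^n * x^n / ((n.factorial : ℝ) * poch B n) *
          ((-1:ℝ)^k * (n.choose k) * poch α k * poch (B + k) (n - k)) := by
    have hvd := vdS_eq n α B
    rw [vdS] at hvd
    rw [← Finset.mul_sum, hvd, hterm, neg_pow x n]
    field_simp
  rw [hrhs]
  apply Finset.sum_congr rfl
  intro k hk
  rw [Finset.mem_range] at hk
  have hkn : k ≤ n := by omega
  have hpB : poch B n = poch B k * poch (B + k) (n - k) := by
    have := poch_add B k (n - k)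
    rw [show k + (n - k) = n by omega] at this
    exact this
  have hBk : poch B k ≠ 0 := hB k
  have hBk2 : poch (B + k) (n - k) ≠ 0 := by
    intro h; exact hB n (by rw [hpB, h, mul_zero])
  have hchoose : (n.choose k : ℝ) * (k.factorial : ℝ) * ((n-k).factorial : ℝ) = (n.factorial : ℝ) := by
    exact_mod_cast congrArg (Nat.cast : ℕ → ℝ) (Nat.choose_mul_factorial_mul_factorial hkn)
  have hsign : (-1:ℝ)^(n-k) * (-1:ℝ)^k = (-1:ℝ)^n := by
    rw [← pow_add]; congr 1; omega
  have hxsplit : x^k * x^(n-k) = x^n := by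
    rw [← pow_add]; congr 1; omega
  have hkf : ((k.factorial : ℕ) : ℝ) ≠ 0 := Nat.cast_ne_zero.mpr (Nat.factorial_ne_zero _)
  have hnkf : (((n-k).factorial : ℕ) : ℝ) ≠ 0 := Nat.cast_ne_zero.mpr (Nat.factorial_ne_zero _)
  have hnf : ((n.factorial : ℕ) : ℝ) ≠ 0 := Nat.cast_ne_zero.mpr (Nat.factorial_ne_zero _)
  have hcne : ((n.choose k : ℕ) : ℝ) ≠ 0 := Nat.cast_ne_zero.mpr (Nat.choose_pos hkn).ne'
  have h2 : (-1:ℝ)^k * (-1:ℝ)^k = 1 := by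
    rw [← pow_add]; exact Even.neg_one_pow ⟨k, rfl⟩
  rw [hterm, neg_pow x (n-k), hpB, ← hsign, ← hxsplit, ← hchoose]
  field_simp
  linear_combination (-(poch α k * x ^ k * x^(n-k))) * h2

lemma betaIntegrable {u v t : ℝ} (hu : 0 < u) (hv : 0 < v) (ht : 0 < t) :
    IntervalIntegrable (fun x => x ^ (u-1) * (t - x) ^ (v-1)) MeasureTheory.volume 0 t := by
  have h1 : IntervalIntegrable (fun x => x ^ (u-1) * (t - x) ^ (v-1))
      MeasureTheory.volume 0 (t/2) := by
    apply IntervalIntegrable.mul_continuousOn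
    · exact intervalIntegral.intervalIntegrable_rpow' (by linarith)
    · apply ContinuousOn.rpow_const
      · exact (continuous_const.sub continuous_id).continuousOn
      · intro x hx
        rw [Set.uIcc_of_le (by linarith)] at hx
        left
        intro h
        nlinarith [hx.2]
  have h2 : IntervalIntegrable (fun x => x ^ (u-1) * (t - x) ^ (v-1))
      MeasureTheory.volume (t/2) t := by
    apply IntervalIntegrable.continuousOn_mul
    · have base : IntervalIntegrable (fun y : ℝ => y ^ (v-1)) MeasureTheory.volume 0 (t/2) :=
        intervalIntegral.intervalIntegrable_rpow' (by linarith)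
      have h3 := base.comp_sub_left t
      rw [show t - t/2 = t/2 by ring, sub_zero] at h3
      exact h3.symm
    · apply ContinuousOn.rpow_const continuous_id.continuousOn
      intro x hx
      rw [Set.uIcc_of_le (by linarith)] at hx
      left
      intro h
      simp only [id_eq] at h
      nlinarith [hx.1]
  exact h1.trans h2

lemma betaValue {u v t : ℝ} (hu : 0 < u) (hv : 0 < v) (ht : 0 < t) :
    ∫ x in (0:ℝ)..t, x ^ (u-1) * (t - x) ^ (v-1)
      = Real.Gamma u * Real.Gamma v / Real.Gamma (u+v) * t ^ (u+v-1) := by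
  have h1 := Complex.betaIntegral_scaled (u:ℂ) (v:ℂ) ht
  have hcongr : (∫ x in (0:ℝ)..t, (x:ℂ) ^ ((u:ℂ) - 1) * ((t:ℂ) - (x:ℂ)) ^ ((v:ℂ) - 1))
      = ((∫ x in (0:ℝ)..t, x ^ (u-1) * (t - x) ^ (v-1) : ℝ) : ℂ) := by
    rw [← intervalIntegral.integral_ofReal]
    apply intervalIntegral.integral_congr
    intro x hx
    rw [Set.uIcc_of_le ht.le] at hx
    dsimp only
    have hx0 : (0:ℝ) ≤ x := hx.1
    have hxt : (0:ℝ) ≤ t - x := by linarith [hx.2]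
    have e1 : ((u:ℂ) - 1) = ((u - 1 : ℝ) : ℂ) := by push_cast; ring
    have e2 : ((v:ℂ) - 1) = ((v - 1 : ℝ) : ℂ) := by push_cast; ring
    have e3 : ((t:ℂ) - (x:ℂ)) = ((t - x : ℝ) : ℂ) := by push_cast; ring
    rw [e1, e2, e3, ← Complex.ofReal_cpow hx0, ← Complex.ofReal_cpow hxt, ← Complex.ofReal_mul]
  rw [hcongr] at h1
  have hbeta : Complex.betaIntegral (u:ℂ) (v:ℂ)
      = Complex.Gamma u * Complex.Gamma v / Complex.Gamma ((u:ℂ)+(v:ℂ)) := by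
    have := Complex.Gamma_mul_Gamma_eq_betaIntegral
      (s := (u:ℂ)) (t := (v:ℂ)) (by simpa using hu) (by simpa using hv)
    have hne : Complex.Gamma ((u:ℂ)+(v:ℂ)) ≠ 0 := by
      apply Complex.Gamma_ne_zero_of_re_pos
      simp only [Complex.add_re, Complex.ofReal_re]
      linarith
    field_simp
    linear_combination -this
  rw [hbeta] at h1
  have hrhs : ((t:ℂ)) ^ ((u:ℂ) + (v:ℂ) - 1) *
      (Complex.Gamma u * Complex.Gamma v / Complex.Gamma ((u:ℂ)+(v:ℂ)))
      = ((Real.Gamma u * Real.Gamma v / Real.Gamma (u+v) * t ^ (u+v-1) : ℝ) : ℂ) := by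
    have e4 : ((u:ℂ) + (v:ℂ) - 1) = ((u + v - 1 : ℝ) : ℂ) := by push_cast; ring
    have e5 : ((u:ℂ) + (v:ℂ)) = ((u + v : ℝ) : ℂ) := by norm_cast
    rw [e4, e5, ← Complex.ofReal_cpow ht.le, Complex.Gamma_ofReal, Complex.Gamma_ofReal,
      Complex.Gamma_ofReal]
    push_cast
    ring
  rw [hrhs] at h1
  exact_mod_cast h1

lemma Gamma_add_nat {s : ℝ} (hs : 0 < s) (n : ℕ) :
    Real.Gamma (s + n) = Real.Gamma s * poch s n := by
  induction n with
  | zero => simp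
  | succ n ih =>
    have h1 : s + ((n:ℝ) + 1) = (s + n) + 1 := by ring
    have h2 : s + (n:ℝ) ≠ 0 := by positivity
    rw [Nat.cast_add, Nat.cast_one, h1, Real.Gamma_add_one h2, ih, poch_succ_right]
    ring

lemma main_integral (d c B t : ℝ) (hd : 0 < d) (hc : 0 < c) (ht : 0 < t)
    (hB : ∀ n : ℕ, poch B n ≠ 0) :
    ∫ x in Set.Ioc (0:ℝ) t, (t - x) ^ (c-1) * x ^ (d-1) * (∑' n, hterm (d+c) B (-x) n)
      = Real.Gamma c * Real.Gamma d / Real.Gamma (d+c) * t ^ (d+c-1) *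
        (∑' n, hterm d B (-t) n) := by
  set cst : ℕ → ℝ := fun n => poch (d+c) n / poch B n / (n.factorial : ℝ) with hcst
  -- the n-th term function
  set F : ℕ → ℝ → ℝ := fun n x => (t - x) ^ (c-1) * x ^ (d-1) * hterm (d+c) B (-x) n with hF
  have hFeq : ∀ n : ℕ, ∀ x ∈ Set.Ioc (0:ℝ) t,
      F n x = ((-1:ℝ)^n * cst n) * (x ^ (d + n - 1) * (t - x) ^ (c-1)) := by
    intro n x hx
    have hx0 : 0 < x := hx.1
    have e1 : x ^ (d + n - 1) = x ^ (d-1) * x ^ n := by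
      rw [show d + (n:ℝ) - 1 = (d - 1) + n by ring, Real.rpow_add hx0, Real.rpow_natCast]
    simp only [hF, hterm, hcst]
    rw [e1, neg_pow]
    ring
  -- integrability of each term
  have hint : ∀ n : ℕ, MeasureTheory.IntegrableOn
      (fun x => x ^ (d + n - 1) * (t - x) ^ (c-1)) (Set.Ioc 0 t) MeasureTheory.volume := by
    intro n
    have := betaIntegrable (u := d + n) (v := c) (by positivity) hc ht
    rwa [intervalIntegrable_iff_integrableOn_Ioc_of_le ht.le] at this
  have hintF : ∀ n : ℕ, MeasureTheory.IntegrableOn (F n) (Set.Ioc 0 t) MeasureTheory.volume := by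
    intro n
    apply MeasureTheory.IntegrableOn.congr_fun (((hint n).const_mul ((-1:ℝ)^n * cst n)))
      _ measurableSet_Ioc
    intro x hx
    exact (hFeq n x hx).symm
  -- norm bound and summability
  set K : ℝ := ∫ x in Set.Ioc (0:ℝ) t, x ^ (d-1) * (t - x) ^ (c-1) with hK
  have hK0 : 0 ≤ K := by
    apply MeasureTheory.setIntegral_nonneg measurableSet_Ioc
    intro x hx
    have : 0 < x := hx.1
    have : 0 ≤ t - x := by linarith [hx.2]
    positivity
  have hbound : ∀ n : ℕ, (∫ x in Set.Ioc (0:ℝ) t, ‖F n x‖) ≤ ‖hterm (d+c) B t n‖ * K := by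
    intro n
    have step : ∀ x ∈ Set.Ioc (0:ℝ) t, ‖F n x‖ ≤ ‖hterm (d+c) B t n‖ * (x ^ (d-1) * (t - x) ^ (c-1)) := by
      intro x hx
      have hx0 : 0 < x := hx.1
      have hxt : 0 ≤ t - x := by linarith [hx.2]
      rw [hFeq n x hx]
      rw [norm_mul, Real.norm_eq_abs, Real.norm_eq_abs]
      have e1 : |x ^ (d + n - 1) * (t - x) ^ (c-1)| = x ^ (d-1) * x ^ n * (t - x) ^ (c-1) := by
        rw [abs_of_nonneg (by positivity), show d + (n:ℝ) - 1 = (d - 1) + n by ring,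
          Real.rpow_add hx0, Real.rpow_natCast]
      rw [e1]
      have e2 : |(-1:ℝ)^n * cst n| = |cst n| := by
        rw [abs_mul, abs_pow, abs_neg, abs_one, one_pow, one_mul]
      rw [e2]
      have e3 : ‖hterm (d+c) B t n‖ = |cst n| * t ^ n := by
        simp only [hterm, hcst, Real.norm_eq_abs]
        rw [show poch (d+c) n / poch B n * t ^ n / (n.factorial : ℝ)
            = (poch (d+c) n / poch B n / (n.factorial : ℝ)) * t ^ n from by ring,
          abs_mul, abs_of_nonneg (pow_nonneg ht.le n)]
      rw [e3]
      have hxn : x ^ n ≤ t ^ n := pow_le_pow_left₀ hx0.le hx.2 n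
      have h1 : 0 ≤ x ^ (d-1) := by positivity
      have h2 : 0 ≤ (t - x) ^ (c-1) := by positivity
      have h3 : 0 ≤ |cst n| := abs_nonneg _
      calc |cst n| * (x ^ (d-1) * x ^ n * (t - x) ^ (c-1))
          ≤ |cst n| * (x ^ (d-1) * t ^ n * (t - x) ^ (c-1)) := by
            apply mul_le_mul_of_nonneg_left _ h3
            apply mul_le_mul_of_nonneg_right _ h2
            exact mul_le_mul_of_nonneg_left hxn h1
        _ = |cst n| * t ^ n * (x ^ (d-1) * (t - x) ^ (c-1)) := by ring
    calc (∫ x in Set.Ioc (0:ℝ) t, ‖F n x‖)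
        ≤ ∫ x in Set.Ioc (0:ℝ) t, ‖hterm (d+c) B t n‖ * (x ^ (d-1) * (t - x) ^ (c-1)) := by
          apply MeasureTheory.setIntegral_mono_on ((hintF n).norm)
            (((hint 0).congr_fun (fun x hx => by
              rw [show d + (0:ℕ) - 1 = d - 1 by push_cast; ring]) measurableSet_Ioc).const_mul _)
            measurableSet_Ioc step
      _ = ‖hterm (d+c) B t n‖ * K := by rw [MeasureTheory.integral_const_mul, hK]
  have hsum : Summable (fun n => ∫ x in Set.Ioc (0:ℝ) t, ‖F n x‖) := by
    apply Summable.of_nonneg_of_le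
      (fun n => MeasureTheory.integral_nonneg (fun x => norm_nonneg _)) hbound
    exact (summable_norm_hterm (d+c) B t hB).mul_right K
  -- swap
  have hswap : (∫ x in Set.Ioc (0:ℝ) t, ∑' n, F n x)
      = ∑' n, ∫ x in Set.Ioc (0:ℝ) t, F n x :=
    (MeasureTheory.integral_tsum_of_summable_integral_norm hintF hsum).symm
  have hlhs : (∫ x in Set.Ioc (0:ℝ) t, (t - x) ^ (c-1) * x ^ (d-1) * (∑' n, hterm (d+c) B (-x) n))
      = ∫ x in Set.Ioc (0:ℝ) t, ∑' n, F n x := by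
    apply MeasureTheory.setIntegral_congr_fun measurableSet_Ioc
    intro x hx
    dsimp only [hF]
    exact (tsum_mul_left (a := (t - x) ^ (c-1) * x ^ (d-1))).symm
  -- value of each term integral
  have hval : ∀ n : ℕ, (∫ x in Set.Ioc (0:ℝ) t, F n x)
      = (Real.Gamma c * Real.Gamma d / Real.Gamma (d+c) * t ^ (d+c-1)) * hterm d B (-t) n := by
    intro n
    have h1 : (∫ x in Set.Ioc (0:ℝ) t, F n x)
        = ((-1:ℝ)^n * cst n) * ∫ x in Set.Ioc (0:ℝ) t, x ^ (d + n - 1) * (t - x) ^ (c-1) := by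
      rw [← MeasureTheory.integral_const_mul]
      apply MeasureTheory.setIntegral_congr_fun measurableSet_Ioc
      intro x hx
      exact hFeq n x hx
    have h2 : (∫ x in Set.Ioc (0:ℝ) t, x ^ (d + n - 1) * (t - x) ^ (c-1))
        = Real.Gamma (d + n) * Real.Gamma c / Real.Gamma (d + n + c) * t ^ (d + n + c - 1) := by
      rw [← intervalIntegral.integral_of_le ht.le]
      have := betaValue (u := d + n) (v := c) (by positivity) hc ht
      rw [show d + (n:ℝ) + c - 1 = d + n + c - 1 by ring] at this
      convert this using 3 <;> ring
    rw [h1, h2]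
    have e1 : Real.Gamma (d + n) = Real.Gamma d * poch d n := Gamma_add_nat hd n
    have e2 : Real.Gamma (d + n + c) = Real.Gamma (d + c) * poch (d+c) n := by
      rw [show d + (n:ℝ) + c = (d + c) + n by ring]
      exact Gamma_add_nat (by positivity) n
    have e3 : t ^ (d + (n:ℝ) + c - 1) = t ^ (d + c - 1) * t ^ n := by
      rw [show d + (n:ℝ) + c - 1 = (d + c - 1) + n by ring, Real.rpow_add ht, Real.rpow_natCast]
    have hGdc : Real.Gamma (d + c) ≠ 0 := (Real.Gamma_pos_of_pos (by positivity)).ne'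
    have hpdc : poch (d+c) n ≠ 0 := (poch_pos (by positivity) n).ne'
    have hBn : poch B n ≠ 0 := hB n
    have hnf : ((n.factorial : ℕ) : ℝ) ≠ 0 := Nat.cast_ne_zero.mpr (Nat.factorial_ne_zero _)
    rw [e1, e2, e3]
    simp only [hterm, hcst]
    rw [neg_pow]
    field_simp
    ring
  rw [hlhs, hswap]
  rw [tsum_congr hval, tsum_mul_left]

/-- for `a+b > -1/2`, `c > 0`, `t > 0` (with `1+2b` not a nonpositive
integer), `∫_0^t (t-x)^{c-1} x^{a-1} e^{-x/2} M_{a+c,b}(x) dx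
= Γ(c)Γ(a+b+1/2)/Γ(a+b+c+1/2) · t^{a+c-1} e^{-t/2} M_{a,b}(t)`. -/
theorem whittakerM_integral_identity (a b c t : ℝ)
    (hab : -(1/2) < a + b) (hc : 0 < c) (ht : 0 < t)
    (hbeta : ∀ n : ℕ, 1 + 2*b ≠ -(n : ℝ)) :
    ∫ x in (0:ℝ)..t, (t - x) ^ (c - 1) * x ^ (a - 1) * Real.exp (-x/2) * whittakerM (a+c) b x
      = Real.Gamma c * Real.Gamma (a + b + 1/2) / Real.Gamma (a + b + c + 1/2) *
        t ^ (a + c - 1) * Real.exp (-t/2) * whittakerM a b t := by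
  have hd : 0 < a + b + 1/2 := by linarith
  have hB : ∀ n : ℕ, poch (1 + 2*b) n ≠ 0 := by
    intro n h
    rw [poch, ascPochhammer_eval_eq_zero_iff] at h
    obtain ⟨k, hk, hkeq⟩ := h
    exact hbeta k (by linarith [hkeq])
  have h1F1 : ∀ p x : ℝ, hyp1F1 p (1 + 2*b) x = ∑' n, hterm p (1 + 2*b) x n := fun p x => rfl
  rw [intervalIntegral.integral_of_le ht.le]
  have hcongr : (∫ x in Set.Ioc (0:ℝ) t,
        (t - x) ^ (c - 1) * x ^ (a - 1) * Real.exp (-x/2) * whittakerM (a+c) b x)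
      = ∫ x in Set.Ioc (0:ℝ) t, (t - x) ^ (c - 1) * x ^ (a + b + 1/2 - 1) *
          (∑' n, hterm (a + b + 1/2 + c) (1 + 2*b) (-x) n) := by
    apply MeasureTheory.setIntegral_congr_fun measurableSet_Ioc
    intro x hx
    have hx0 : 0 < x := hx.1
    have hk1 := kummer (1/2 + b - (a+c)) (1 + 2*b) x hB
    rw [show (1 + 2*b) - (1/2 + b - (a+c)) = a + b + 1/2 + c from by ring] at hk1
    have hxp : x ^ (a - 1) * x ^ (1/2 + b) = x ^ (a + b + 1/2 - 1) := by
      rw [← Real.rpow_add hx0]; congr 1; ring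
    have hexp : Real.exp (-x/2) * Real.exp (-x/2) = Real.exp (-x) := by
      rw [← Real.exp_add]; congr 1; ring
    have hwM : whittakerM (a+c) b x
        = x ^ (1/2 + b) * Real.exp (-x/2) * ∑' n, hterm (1/2 + b - (a+c)) (1 + 2*b) x n := by
      rw [whittakerM, h1F1]
    dsimp only
    rw [hwM, ← hk1, ← hxp, ← hexp]
    ring
  rw [hcongr, main_integral (a + b + 1/2) c (1 + 2*b) t hd hc ht hB]
  have hk2 := kummer (1/2 + b - a) (1 + 2*b) t hB
  rw [show (1 + 2*b) - (1/2 + b - a) = a + b + 1/2 from by ring] at hk2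
  have hwM2 : whittakerM a b t
      = t ^ (1/2 + b) * Real.exp (-t/2) * ∑' n, hterm (1/2 + b - a) (1 + 2*b) t n := by
    rw [whittakerM, h1F1]
  have hxp2 : t ^ (a + c - 1) * t ^ (1/2 + b) = t ^ (a + b + 1/2 + c - 1) := by
    rw [← Real.rpow_add ht]; congr 1; ring
  have hexp2 : Real.exp (-t/2) * Real.exp (-t/2) = Real.exp (-t) := by
    rw [← Real.exp_add]; congr 1; ring
  have hG : Real.Gamma (a + b + 1/2 + c) = Real.Gamma (a + b + c + 1/2) := by
    congr 1; ring
  rw [hwM2, ← hk2, hG, ← hxp2, ← hexp2]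
  ring
end

section
/- Fix $A \in (0, A^*)$ where $A^*$ solves $M_{1,0}(2/A^*) = 0$, and suppose $\lambda_A \in (0,1/8)$ with $\xi = \sqrt{1-8\lambda_A}$ satisfies $M_{1,\xi/2}(2/A) = 0$. Then the function $q_A(x) = \frac{\xi+1}{2}\cdot \frac{x^{-1} e^{-1/x}\, M_{1,\xi/2}(2/x)}{e^{-1/A}\, M_{0,\xi/2}(2/A)}$ for $x \ge A$ (and $0$ otherwise) satisfies: (i) $q_A(A) = 0$; (ii) $\int_A^{\infty} q_A(x)\,dx = 1$; and (iii) for $x > A$, $\int_A^x q_A(y)\,dy = 1 - \frac{e^{-1/x} M_{0,\xi/2}(2/x)}{e^{-1/A} M_{0,\xi/2}(2/A)}$. -/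
open MeasureTheory Real Filter Set

open Polynomial Topology

namespace QSDaux


lemma poch_succ_left (c : ℝ) (n : ℕ) :
    (ascPochhammer ℝ (n+1)).eval c = c * (ascPochhammer ℝ n).eval (c+1) := by
  rw [ascPochhammer_succ_left]
  simp [Polynomial.eval_comp]

lemma poch_abs_le_factorial {c : ℝ} (hc : |c| ≤ 1) (n : ℕ) :
    |(ascPochhammer ℝ n).eval c| ≤ (n.factorial : ℝ) := by
  induction n with
  | zero => simp
  | succ n ih =>
      rw [ascPochhammer_succ_eval, abs_mul]
      calc |(ascPochhammer ℝ n).eval c| * |c + n| ≤ (n.factorial : ℝ) * (1 + n) := by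
            apply mul_le_mul ih ((abs_add_le _ _).trans (by rw [abs_of_nonneg (Nat.cast_nonneg n : (0:ℝ) ≤ n)] at *; gcongr)) (abs_nonneg _)
            positivity
        _ = ((n+1).factorial : ℝ) := by
            rw [Nat.factorial_succ]; push_cast; ring

lemma factorial_le_poch {b : ℝ} (hb : 1 ≤ b) (n : ℕ) :
    (n.factorial : ℝ) ≤ (ascPochhammer ℝ n).eval b := by
  induction n with
  | zero => simp
  | succ n ih =>
      rw [ascPochhammer_succ_eval, Nat.factorial_succ]
      push_cast
      calc ((n:ℝ)+1) * n.factorial = (n.factorial : ℝ) * (1 + n) := by ring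
        _ ≤ (ascPochhammer ℝ n).eval b * (b + n) := by
            apply mul_le_mul ih (by linarith) (by positivity)
            exact le_trans (by positivity) ih


noncomputable def dcoef (c b : ℝ) (n : ℕ) : ℝ :=
  (ascPochhammer ℝ n).eval c / (ascPochhammer ℝ n).eval b / (n.factorial : ℝ)

lemma hyp_eq (c b : ℝ) : hyp1F1 c b = fun x => ∑' n, dcoef c b n * x ^ n := by
  funext x
  exact tsum_congr fun n => by rw [dcoef]; ring

lemma dcoef_abs_le {c b : ℝ} (hc : |c| ≤ 1) (hb : 1 ≤ b) (n : ℕ) :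
    |dcoef c b n| ≤ 1 / (n.factorial : ℝ) := by
  have hfac : (0:ℝ) < n.factorial := by positivity
  have hq : (n.factorial : ℝ) ≤ (ascPochhammer ℝ n).eval b := factorial_le_poch hb n
  have hp : |(ascPochhammer ℝ n).eval c| ≤ (n.factorial : ℝ) := poch_abs_le_factorial hc n
  have hq0 : (0:ℝ) < (ascPochhammer ℝ n).eval b := lt_of_lt_of_le hfac hq
  rw [dcoef, div_div, abs_div, abs_of_pos (by positivity : (0:ℝ) < (ascPochhammer ℝ n).eval b * n.factorial)]
  rw [div_le_div_iff₀ (by positivity) hfac]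
  calc |(ascPochhammer ℝ n).eval c| * (n.factorial:ℝ)
      ≤ (n.factorial:ℝ) * (n.factorial:ℝ) := by gcongr
    _ ≤ (ascPochhammer ℝ n).eval b * (n.factorial:ℝ) * 1 := by
        rw [mul_one]; gcongr
    _ = 1 * ((ascPochhammer ℝ n).eval b * (n.factorial:ℝ)) := by ring

lemma boundA {c b R : ℝ} (hc : |c| ≤ 1) (hb : 1 ≤ b) (hR : 1 ≤ R) (n : ℕ) {x : ℝ}
    (hx : x ∈ Ioo (-R) R) : ‖dcoef c b n * x ^ n‖ ≤ (2*R) ^ n / (n.factorial : ℝ) := by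
  have hxR : |x| ≤ R := by
    rw [abs_le]; exact ⟨hx.1.le, hx.2.le⟩
  have hR0 : (0:ℝ) ≤ R := by linarith
  calc ‖dcoef c b n * x ^ n‖ = |dcoef c b n| * |x|^n := by
        rw [norm_mul, norm_pow]; rfl
    _ ≤ (1/(n.factorial:ℝ)) * R^n := by
        apply mul_le_mul (dcoef_abs_le hc hb n) (by gcongr) (by positivity) (by positivity)
    _ ≤ (2*R)^n / (n.factorial:ℝ) := by
        rw [mul_pow, one_div, inv_mul_eq_div, div_le_div_iff₀ (by positivity) (by positivity)]
        have : (1:ℝ) ≤ 2^n := one_le_pow₀ (by norm_num)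
        have h2 : R ^ n * 1 ≤ 2 ^ n * R ^ n := by
          rw [mul_comm ((2:ℝ)^n)]; gcongr
        exact mul_le_mul_of_nonneg_right (by linarith) (Nat.cast_nonneg _)

lemma boundB {c b R : ℝ} (hc : |c| ≤ 1) (hb : 1 ≤ b) (hR : 1 ≤ R) (n : ℕ) {x : ℝ}
    (hx : x ∈ Ioo (-R) R) :
    ‖dcoef c b n * ((n:ℝ) * x ^ (n-1))‖ ≤ (2*R) ^ n / (n.factorial : ℝ) := by
  have hxR : |x| ≤ R := by rw [abs_le]; exact ⟨hx.1.le, hx.2.le⟩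
  have hR0 : (0:ℝ) < R := by linarith
  have h1 : ‖dcoef c b n * ((n:ℝ) * x ^ (n-1))‖ = |dcoef c b n| * ((n:ℝ) * |x|^(n-1)) := by
    rw [norm_mul, norm_mul, norm_pow]
    simp [abs_of_nonneg (Nat.cast_nonneg n : (0:ℝ) ≤ n)]
  rw [h1]
  calc |dcoef c b n| * ((n:ℝ) * |x|^(n-1))
      ≤ (1/(n.factorial:ℝ)) * ((2:ℝ)^n * R^n) := by
        apply mul_le_mul (dcoef_abs_le hc hb n) ?_ (by positivity) (by positivity)
        calc (n:ℝ) * |x|^(n-1) ≤ (2:ℝ)^n * R^(n-1) := by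
              apply mul_le_mul (by exact_mod_cast (Nat.lt_two_pow_self (n := n)).le) (by gcongr) (by positivity) (by positivity)
          _ ≤ (2:ℝ)^n * R^n := by
              gcongr
              · exact Nat.sub_le n 1
    _ = (2*R)^n / (n.factorial:ℝ) := by rw [mul_pow]; ring

lemma summable_u (R : ℝ) : Summable (fun n : ℕ => (2*R)^n / (n.factorial : ℝ)) :=
  Real.summable_pow_div_factorial (2*R)

lemma hyp_hasDerivAt {c b R : ℝ} (hc : |c| ≤ 1) (hb : 1 ≤ b) (hR : 1 ≤ R) {x : ℝ}
    (hx : x ∈ Ioo (-R) R) :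
    HasDerivAt (hyp1F1 c b) (∑' n : ℕ, dcoef c b n * ((n:ℝ) * x ^ (n-1))) x := by
  rw [hyp_eq]
  apply hasDerivAt_tsum_of_isPreconnected (summable_u R) isOpen_Ioo isPreconnected_Ioo
    (fun n y _ => (hasDerivAt_pow n y).const_mul (dcoef c b n))
    (fun n y hy => boundB hc hb hR n hy) (y₀ := 0) ⟨by linarith, by linarith⟩ ?_ hx
  apply Summable.of_norm_bounded (summable_u R)
  exact fun n => boundA hc hb hR n ⟨by linarith, by linarith⟩

lemma hyp_summandSummable {c b R : ℝ} (hc : |c| ≤ 1) (hb : 1 ≤ b) (hR : 1 ≤ R) {x : ℝ}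
    (hx : x ∈ Ioo (-R) R) : Summable (fun n : ℕ => dcoef c b n * x ^ n) :=
  Summable.of_norm_bounded (summable_u R) (fun n => boundA hc hb hR n hx)

lemma hyp_derivSummable {c b R : ℝ} (hc : |c| ≤ 1) (hb : 1 ≤ b) (hR : 1 ≤ R) {x : ℝ}
    (hx : x ∈ Ioo (-R) R) : Summable (fun n : ℕ => dcoef c b n * ((n:ℝ) * x ^ (n-1))) :=
  Summable.of_norm_bounded (summable_u R) (fun n => boundB hc hb hR n hx)

lemma hyp_continuousOn {c b R : ℝ} (hc : |c| ≤ 1) (hb : 1 ≤ b) (hR : 1 ≤ R) :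
    ContinuousOn (hyp1F1 c b) (Ioo (-R) R) := by
  rw [hyp_eq]
  exact continuousOn_tsum (fun i => (continuous_const.mul (continuous_pow i)).continuousOn)
    (summable_u R) (fun n x hx => boundA hc hb hR n hx)



lemma dcoef_zero (c b : ℝ) : dcoef c b 0 = 1 := by simp [dcoef]

lemma step {a : ℝ} (ha : 0 < a) (n : ℕ) :
    (a + ((n:ℝ)+1)) * dcoef a (2*a) (n+1) - a * dcoef (a-1) (2*a) (n+1)
      = dcoef a (2*a) n := by
  have hB : 0 < (ascPochhammer ℝ n).eval (2*a) := ascPochhammer_pos n _ (by linarith)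
  have hfac : (0:ℝ) < n.factorial := by positivity
  have h2an : (0:ℝ) < 2*a + n := by positivity
  rw [dcoef, dcoef, dcoef, ascPochhammer_succ_eval, ascPochhammer_succ_eval,
    poch_succ_left, show a - 1 + 1 = a by ring, Nat.factorial_succ]
  push_cast
  field_simp
  ring

lemma key_identity {a R : ℝ} (ha0 : 0 < a) (ha1 : a < 1) (hb2 : (1:ℝ) ≤ 2*a) (hR : 1 ≤ R) {u : ℝ}
    (hu : u ∈ Ioo (-R) R) :
    a * hyp1F1 a (2*a) u - u * hyp1F1 a (2*a) u
      + u * (∑' n : ℕ, dcoef a (2*a) n * ((n:ℝ) * u ^ (n-1)))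
      = a * hyp1F1 (a-1) (2*a) u := by
  have hca : |a| ≤ 1 := by rw [abs_of_pos ha0]; linarith
  have hca' : |a - 1| ≤ 1 := by rw [abs_of_nonpos (by linarith)]; linarith
  have hb : (1:ℝ) ≤ 2*a := hb2
  set f : ℕ → ℝ := fun n => dcoef a (2*a) n * u ^ n with hfdef
  set g : ℕ → ℝ := fun n => dcoef (a-1) (2*a) n * u ^ n with hgdef
  set d : ℕ → ℝ := fun n => dcoef a (2*a) n * ((n:ℝ) * u ^ (n-1)) with hddef
  have hFsum : Summable f := hyp_summandSummable hca hb hR hu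
  have hGsum : Summable g := hyp_summandSummable hca' hb hR hu
  have hDsum : Summable d := hyp_derivSummable hca hb hR hu
  have hF : hyp1F1 a (2*a) u = ∑' n, f n := by rw [hyp_eq]
  have hG : hyp1F1 (a-1) (2*a) u = ∑' n, g n := by rw [hyp_eq]
  set w : ℕ → ℝ := fun n => a * f n + u * d n - a * g n with hwdef
  have hWsum : Summable w := ((hFsum.mul_left a).add (hDsum.mul_left u)).sub (hGsum.mul_left a)
  have hw0 : w 0 = 0 := by simp [hwdef, hfdef, hgdef, hddef, dcoef_zero]
  have hwsucc : ∀ n : ℕ, w (n+1) = u * f n := by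
    intro n
    have hstep := step ha0 n
    simp only [hwdef, hfdef, hgdef, hddef, Nat.add_sub_cancel, Nat.cast_add, Nat.cast_one]
    calc a * (dcoef a (2*a) (n+1) * u^(n+1))
          + u * (dcoef a (2*a) (n+1) * (((n:ℝ)+1) * u^n))
          - a * (dcoef (a-1) (2*a) (n+1) * u^(n+1))
        = ((a + ((n:ℝ)+1)) * dcoef a (2*a) (n+1)
            - a * dcoef (a-1) (2*a) (n+1)) * u^(n+1) := by rw [pow_succ]; ring
      _ = dcoef a (2*a) n * u^(n+1) := by rw [hstep]
      _ = u * (dcoef a (2*a) n * u^n) := by rw [pow_succ]; ring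
  have hWval : ∑' n, w n = u * ∑' n, f n := by
    rw [Summable.tsum_eq_zero_add hWsum, hw0, zero_add, tsum_congr hwsucc, tsum_mul_left]
  have hWsplit : ∑' n, w n = a * (∑' n, f n) + u * (∑' n, d n) - a * (∑' n, g n) := by
    rw [← tsum_mul_left (a := a) (f := f), ← tsum_mul_left (a := u) (f := d),
      ← tsum_mul_left (a := a) (f := g),
      ← Summable.tsum_add (hFsum.mul_left a) (hDsum.mul_left u),
      ← Summable.tsum_sub ((hFsum.mul_left a).add (hDsum.mul_left u)) (hGsum.mul_left a)]
  rw [hF, hG]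
  have : (∑' n, d n) = ∑' n : ℕ, dcoef a (2*a) n * ((n:ℝ) * u ^ (n-1)) := rfl
  linarith [hWval, hWsplit]


end QSDaux

open QSDaux

/-- Theorem 3.1 of the paper: for `A ∈ (0, A*)` with `M_{1,0}(2/A*) = 0`,
if `λ_A ∈ (0,1/8)`, `ξ = √(1-8λ_A)` satisfies `M_{1,ξ/2}(2/A) = 0` (and
`M_{0,ξ/2}(2/A) ≠ 0`), then the quasi-stationary pdf
`q_A(x) = ((ξ+1)/2) x⁻¹e^{-1/x}M_{1,ξ/2}(2/x) / (e^{-1/A}M_{0,ξ/2}(2/A))` for `x ≥ A`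
(and 0 otherwise) satisfies (i) `q_A(A) = 0`, (ii) `∫_A^∞ q_A = 1`, and (iii) for `x > A`,
`∫_A^x q_A = 1 - e^{-1/x}M_{0,ξ/2}(2/x)/(e^{-1/A}M_{0,ξ/2}(2/A))`. -/
theorem qsd_subcritical_case (A Astar lamA : ℝ)
    (hAstar : whittakerM 1 0 (2/Astar) = 0) (hAstarpos : 0 < Astar)
    (hA : A ∈ Set.Ioo 0 Astar) (hlam : lamA ∈ Set.Ioo 0 (1/8)) :
    let ξ := Real.sqrt (1 - 8*lamA)
    whittakerM 1 (ξ/2) (2/A) = 0 → whittakerM 0 (ξ/2) (2/A) ≠ 0 →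
    (let q : ℝ → ℝ := fun x => if A ≤ x then
        ((ξ+1)/2) * ((1/x) * Real.exp (-1/x) * whittakerM 1 (ξ/2) (2/x)) /
          (Real.exp (-1/A) * whittakerM 0 (ξ/2) (2/A))
      else 0
     q A = 0 ∧
     (∫ x in Set.Ioi A, q x = 1) ∧
     ∀ x : ℝ, A < x →
       ∫ y in A..x, q y
         = 1 - (Real.exp (-1/x) * whittakerM 0 (ξ/2) (2/x)) /
               (Real.exp (-1/A) * whittakerM 0 (ξ/2) (2/A))) := by
  intro ξ hM1 hM0 q
  obtain ⟨hA0, hAs⟩ := hA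
  have hξ0 : 0 < ξ := Real.sqrt_pos.mpr (by linarith [hlam.2])
  have hξ1 : ξ < 1 := by
    have : ξ < Real.sqrt 1 := Real.sqrt_lt_sqrt (by linarith [hlam.2]) (by linarith [hlam.1])
    simpa using this
  set a : ℝ := 1/2 + ξ/2 with ha_def
  have ha0 : 0 < a := by positivity
  have ha1 : a < 1 := by rw [ha_def]; linarith
  have hb2 : (1:ℝ) ≤ 2*a := by rw [ha_def]; linarith
  have hca : |a| ≤ 1 := by rw [abs_of_pos ha0]; linarith
  have hca' : |a - 1| ≤ 1 := by rw [abs_of_nonpos (by linarith)]; linarith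
  set R : ℝ := 4/A + 1 with hR_def
  have hR : 1 ≤ R := by
    have : 0 < 4/A := by positivity
    rw [hR_def]; try linarith
  set F : ℝ → ℝ := hyp1F1 a (2*a) with hF_def
  set G : ℝ → ℝ := hyp1F1 (a-1) (2*a) with hG_def
  set f : ℝ → ℝ := fun y => (2/y) ^ a * Real.exp (-(2/y)) * F (2/y) with hf_def
  set C : ℝ := Real.exp (-1/A) * whittakerM 0 (ξ/2) (2/A) with hC_def
  have hC0 : C ≠ 0 := mul_ne_zero (Real.exp_ne_zero _) hM0
  -- membership of 2/y in the ball
  have hmem : ∀ y : ℝ, A ≤ y → (2/y) ∈ Ioo (-R) R := by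
    intro y hy
    have hy0 : 0 < y := lt_of_lt_of_le hA0 hy
    have h1 : 0 < 2/y := by positivity
    have h2 : 2/y ≤ 2/A := div_le_div_of_nonneg_left (by norm_num) hA0 hy
    have h3 : 2/A < R := by
      rw [hR_def]
      have : (2:ℝ)/A < 4/A := by gcongr <;> norm_num
      linarith
    exact ⟨by linarith, by linarith⟩
  -- identification of f with the statement's expression
  have hf_eq : ∀ y : ℝ, 0 < y →
      Real.exp (-1/y) * whittakerM 0 (ξ/2) (2/y) = f y := by
    intro y hy
    have e1 : (1/2 + ξ/2 - 0 : ℝ) = a := by rw [ha_def]; try ring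
    have e2 : (1 + 2*(ξ/2) : ℝ) = 2*a := by rw [ha_def]; try ring
    have e3 : (1/2 + ξ/2 : ℝ) = a := by rw [ha_def]
    rw [hf_def, whittakerM, e1, e2, e3]
    have he : Real.exp (-1/y) * Real.exp (-(2/y)/2) = Real.exp (-(2/y)) := by
      rw [← Real.exp_add]; congr 1; ring
    calc Real.exp (-1/y) * ((2/y) ^ a * Real.exp (-(2/y)/2) * hyp1F1 a (2*a) (2/y))
        = (2/y) ^ a * (Real.exp (-1/y) * Real.exp (-(2/y)/2)) * hyp1F1 a (2*a) (2/y) := by ring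
      _ = (2/y) ^ a * Real.exp (-(2/y)) * F (2/y) := by rw [he]
  -- identification of the pdf numerator
  have hnum_eq : ∀ y : ℝ, 0 < y →
      ((ξ+1)/2) * ((1/y) * Real.exp (-1/y) * whittakerM 1 (ξ/2) (2/y))
        = a * (1/y) * ((2/y) ^ a * Real.exp (-(2/y)) * G (2/y)) := by
    intro y hy
    have e1 : (1/2 + ξ/2 - 1 : ℝ) = a - 1 := by rw [ha_def]; try ring
    have e2 : (1 + 2*(ξ/2) : ℝ) = 2*a := by rw [ha_def]; try ring
    have e3 : (1/2 + ξ/2 : ℝ) = a := by rw [ha_def]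
    have e4 : ((ξ+1)/2 : ℝ) = a := by rw [ha_def]; try ring
    rw [whittakerM, e1, e2, e3, e4]
    have he : Real.exp (-1/y) * Real.exp (-(2/y)/2) = Real.exp (-(2/y)) := by
      rw [← Real.exp_add]; congr 1; ring
    calc a * ((1/y) * Real.exp (-1/y) * ((2/y) ^ a * Real.exp (-(2/y)/2) * hyp1F1 (a-1) (2*a) (2/y)))
        = a * (1/y) * ((2/y) ^ a * (Real.exp (-1/y) * Real.exp (-(2/y)/2)) * hyp1F1 (a-1) (2*a) (2/y)) := by
          ring
      _ = a * (1/y) * ((2/y) ^ a * Real.exp (-(2/y)) * G (2/y)) := by rw [he]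
  have hCf : C = f A := by rw [hC_def]; exact hf_eq A hA0
  -- the derivative of f
  set f' : ℝ → ℝ := fun y => -(a * (1/y) * ((2/y) ^ a * Real.exp (-(2/y)) * G (2/y))) with hf'_def
  have hf_deriv : ∀ y ∈ Ici A, HasDerivAt f (f' y) y := by
    intro y hy
    have hy0 : 0 < y := lt_of_lt_of_le hA0 hy
    have hu := hmem y hy
    have hu0 : 0 < 2/y := by positivity
    have h1 : HasDerivAt (fun z : ℝ => 2/z) (-(2/y^2)) y := by
      have := (hasDerivAt_inv hy0.ne').const_mul (2:ℝ)
      simp only [div_eq_mul_inv]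
      exact this.congr_deriv (by ring)
    have h2 : HasDerivAt (fun z : ℝ => (2/z) ^ a) ((a * (2/y)^(a-1)) * (-(2/y^2))) y :=
      (Real.hasDerivAt_rpow_const (p := a) (Or.inl hu0.ne')).comp y h1
    have h3 : HasDerivAt (fun z : ℝ => Real.exp (-(2/z))) (Real.exp (-(2/y)) * (2/y^2)) y := by
      have hneg : HasDerivAt (fun z : ℝ => -(2/z)) (2/y^2) y := by
        have := h1.neg
        exact this.congr_deriv (by ring)
      exact (Real.hasDerivAt_exp _).comp y hneg
    have h4 : HasDerivAt (fun z : ℝ => F (2/z))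
        ((∑' n : ℕ, dcoef a (2*a) n * ((n:ℝ) * (2/y) ^ (n-1))) * (-(2/y^2))) y :=
      (hyp_hasDerivAt hca hb2 hR hu).comp y h1
    have hD := (h2.mul h3).mul h4
    have hK := key_identity ha0 ha1 hb2 hR hu
    have hua : (2/y) ^ a = (2/y) ^ (a-1) * (2/y) := by
      have h := Real.rpow_add_one hu0.ne' (a-1)
      rw [show a - 1 + 1 = a by ring] at h
      exact h
    refine hD.congr_deriv ?_
    refine Eq.symm ?_
    simp only [Pi.mul_apply]
    rw [hf'_def]
    simp only []
    rw [hua]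
    linear_combination ((2/y^2) * (2/y)^(a-1) * Real.exp (-(2/y))) * hK
  -- q equals -(f' y)/C on [A, ∞)
  have hq_eq : ∀ y : ℝ, A ≤ y → q y = -(f' y) / C := by
    intro y hy
    have hy0 : 0 < y := lt_of_lt_of_le hA0 hy
    show (if A ≤ y then _ else 0) = _
    rw [if_pos hy, hf'_def, neg_neg, hnum_eq y hy0]
  -- the antiderivative
  set Φ : ℝ → ℝ := fun y => 1 - f y / C with hΦ_def
  have hΦ_deriv : ∀ y ∈ Ici A, HasDerivAt Φ (q y) y := by
    intro y hy
    rw [hq_eq y hy]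
    have := ((hf_deriv y hy).div_const C).const_sub 1
    exact this.congr_deriv (by ring)
  have hΦA : Φ A = 0 := by rw [hΦ_def]; simp only []; rw [← hCf, div_self hC0]; ring
  -- continuity of q on [A, ∞)
  have hGcont : ContinuousOn G (Ioo (-R) R) := hyp_continuousOn hca' hb2 hR
  have hq_cont : ContinuousOn q (Ici A) := by
    have hc' : ContinuousOn
        (fun y => a * (1/y) * ((2/y) ^ a * Real.exp (-(2/y)) * G (2/y)) / C) (Ici A) := by
      intro y hy
      have hy0 : 0 < y := lt_of_lt_of_le hA0 hy
      have h2y : ContinuousAt (fun z : ℝ => 2/z) y :=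
        continuousAt_const.div continuousAt_id hy0.ne'
      have h1y : ContinuousAt (fun z : ℝ => 1/z) y :=
        continuousAt_const.div continuousAt_id hy0.ne'
      have hGy : ContinuousAt (fun z : ℝ => G (2/z)) y :=
        (hGcont.continuousAt (isOpen_Ioo.mem_nhds (hmem y hy))).comp h2y
      have hrp : ContinuousAt (fun z : ℝ => (2/z) ^ a) y := h2y.rpow_const (Or.inr ha0.le)
      have hexp : ContinuousAt (fun z : ℝ => Real.exp (-(2/z))) y :=
        Real.continuous_exp.continuousAt.comp h2y.neg
      exact (((continuousAt_const.mul h1y).mul ((hrp.mul hexp).mul hGy)).div_const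
        C).continuousWithinAt
    apply hc'.congr
    intro y hy
    rw [hq_eq y hy, hf'_def]
    simp only []
    rw [neg_neg]
  -- tendsto of Φ at infinity
  have h2y_top : Tendsto (fun y : ℝ => 2/y) atTop (𝓝 0) :=
    tendsto_const_nhds.div_atTop tendsto_id
  have hf_top : Tendsto f atTop (𝓝 0) := by
    have h0mem : (0:ℝ) ∈ Ioo (-R) R := ⟨by linarith, by linarith⟩
    have hF0 : Tendsto (fun y : ℝ => F (2/y)) atTop (𝓝 (F 0)) :=
      (((hyp_continuousOn hca hb2 hR).continuousAt
        (isOpen_Ioo.mem_nhds h0mem)).tendsto).comp h2y_top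
    have hrp0 : Tendsto (fun y : ℝ => (2/y) ^ a) atTop (𝓝 0) := by
      have hc : ContinuousAt (fun u : ℝ => u ^ a) 0 :=
        Real.continuousAt_rpow_const 0 a (Or.inr ha0.le)
      have h := hc.tendsto.comp h2y_top
      simpa [Real.zero_rpow ha0.ne', Function.comp_def] using h
    have hexp0 : Tendsto (fun y : ℝ => Real.exp (-(2/y))) atTop (𝓝 1) := by
      have hn : Tendsto (fun y : ℝ => -(2/y)) atTop (𝓝 0) := by
        simpa using h2y_top.neg
      have h := (Real.continuous_exp.continuousAt (x := (0:ℝ))).tendsto.comp hn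
      simpa [Function.comp_def] using h
    have h := (hrp0.mul hexp0).mul hF0
    rw [hf_def]
    simpa using h
  have hΦ_top : Tendsto Φ atTop (𝓝 1) := by
    have := (hf_top.div_const C).const_sub 1
    simpa using this
  -- integrability of q on (A, ∞)
  have h2AR : 2/A < R := by
    rw [hR_def]
    have : (2:ℝ)/A < 4/A := by gcongr <;> norm_num
    linarith
  have hq_int : IntegrableOn q (Ioi A) := by
    obtain ⟨Mg, hMg⟩ := (isCompact_Icc (a := (0:ℝ)) (b := 2/A)).exists_bound_of_continuousOn
      (hGcont.mono (fun z hz => ⟨by linarith [hz.1], lt_of_le_of_lt hz.2 h2AR⟩))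
    have hMg0 : 0 ≤ Mg := le_trans (norm_nonneg _) (hMg 0 ⟨le_rfl, by positivity⟩)
    refine Integrable.mono'
      ((integrableOn_Ioi_rpow_of_lt (show -1-a < -1 by linarith) hA0).const_mul
        (a * 2 ^ a * Mg / |C|))
      ((hq_cont.mono Ioi_subset_Ici_self).aestronglyMeasurable measurableSet_Ioi) ?_
    refine (ae_restrict_iff' measurableSet_Ioi).mpr (ae_of_all _ ?_)
    intro y hy
    have hyA : A < y := hy
    have hy0 : 0 < y := lt_of_lt_of_le hA0 hyA.le
    have hu0 : 0 < 2/y := by positivity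
    have hrp_pos : (0:ℝ) < (2/y) ^ a := Real.rpow_pos_of_pos hu0 a
    have hya : (0:ℝ) < y ^ a := Real.rpow_pos_of_pos hy0 a
    rw [hq_eq y hyA.le, hf'_def]
    simp only []
    rw [neg_neg]
    have hGb : |G (2/y)| ≤ Mg := hMg (2/y)
      ⟨hu0.le, div_le_div_of_nonneg_left (by norm_num) hA0 hyA.le⟩
    have hexb : Real.exp (-(2/y)) ≤ 1 := Real.exp_le_one_iff.mpr (by linarith)
    have hnorm : ‖a * (1/y) * ((2/y) ^ a * Real.exp (-(2/y)) * G (2/y)) / C‖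
        = a * (1/y) * ((2/y) ^ a * Real.exp (-(2/y))) * |G (2/y)| / |C| := by
      rw [Real.norm_eq_abs, abs_div, abs_mul, abs_mul, abs_mul, abs_mul,
        abs_of_pos ha0, abs_of_pos (by positivity : (0:ℝ) < 1/y),
        abs_of_pos hrp_pos, abs_of_pos (Real.exp_pos _)]
      ring
    rw [hnorm]
    have hpow : y ^ (-1-a) = (y * y ^ a)⁻¹ := by
      rw [show -1-a = -(1+a) by ring, Real.rpow_neg hy0.le, Real.rpow_add hy0,
        Real.rpow_one]
    have hdr : (2/y) ^ a = 2 ^ a / y ^ a := Real.div_rpow (by norm_num) hy0.le a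
    calc a * (1/y) * ((2/y) ^ a * Real.exp (-(2/y))) * |G (2/y)| / |C|
        ≤ a * (1/y) * ((2/y) ^ a * 1) * Mg / |C| := by gcongr
      _ = a * 2 ^ a * Mg / |C| * y ^ (-1-a) := by
          have h3 : |C| ≠ 0 := abs_ne_zero.mpr hC0
          rw [hpow, hdr, mul_inv]
          field_simp
  refine ⟨?_, ?_, ?_⟩
  · -- q A = 0
    show (if A ≤ A then _ else 0) = 0
    rw [if_pos le_rfl, hM1]
    simp
  · -- total mass one
    have := integral_Ioi_of_hasDerivAt_of_tendsto'
      (f := Φ) (f' := q) (a := A) (m := 1) hΦ_deriv hq_int hΦ_top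
    rw [this, hΦA, sub_zero]
  · -- cdf formula
    intro x hx
    have hint : IntervalIntegrable q volume A x := by
      apply ContinuousOn.intervalIntegrable
      apply hq_cont.mono
      rw [uIcc_of_le hx.le]
      exact fun z hz => hz.1
    have := intervalIntegral.integral_eq_sub_of_hasDerivAt
      (f := Φ) (f' := q) (a := A) (b := x)
      (fun y hy => hΦ_deriv y (by
        rw [uIcc_of_le hx.le] at hy
        exact hy.1)) hint
    rw [this, hΦA, sub_zero, hΦ_def]
    simp only []
    rw [hf_eq x (by linarith)]
end
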